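/- A sequence (a_k) of p-adic integers satisfies a_{mp^r} ≡ a_{mp^{r-1}} (mod p^r) for all primes p, all m ≥ 0 and all r ≥ 1, if and only if for every positive integer m, the sum ∑_{d | m} μ(m/d)·a_d is divisible by m. -/

import Mathlib

open Finset ArithmeticFunction
open scoped ArithmeticFunction.Moebius

private def gSumAux (a : ℕ → ℤ) (n : ℕ) : ℤ :=
  ∑ d ∈ n.divisors, μ (n / d) * a d

private lemma gSumAux_inversion (a : ℕ → ℤ) :
    ∀ n > 0, ∑ d ∈ n.divisors, gSumAux a d = a n := by
  rw [ArithmeticFunction.sum_eq_iff_sum_mul_moebius_eq (f := fun n => gSumAux a n) (g := a)]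
  intro n hn
  simp only [Int.cast_id]
  rw [Nat.sum_divisorsAntidiagonal' (f := fun x y => (μ x : ℤ) * a y)]
  rfl

private lemma pow_dvd_gSumAux (a : ℕ → ℤ)
    (H : ∀ p : ℕ, p.Prime → ∀ m r : ℕ, 1 ≤ r →
      a (m * p ^ r) ≡ a (m * p ^ (r - 1)) [ZMOD (p : ℤ) ^ r])
    {m p : ℕ} (hm : 0 < m) (hp : p.Prime) :
    (p : ℤ) ^ (m.factorization p) ∣ gSumAux a m := by
  set e := m.factorization p with hedef
  rcases Nat.eq_zero_or_pos e with h0 | he1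
  · rw [h0, pow_zero]; exact one_dvd _
  have hm0 : m ≠ 0 := hm.ne'
  set f : ℕ → ℤ := fun d => (μ (m / d) : ℤ) * a d with hf
  set U : Finset ℕ := m.divisors.filter (fun d => p ^ e ∣ d) with hU
  -- facts about elements of U
  have hUfacts : ∀ u ∈ U, u ∣ m ∧ p ^ e ∣ u ∧ u ≠ 0 ∧ u.factorization p = e := by
    intro u hu
    rw [hU, Finset.mem_filter, Nat.mem_divisors] at hu
    obtain ⟨⟨hum, -⟩, hpu⟩ := hu
    have hu0 : u ≠ 0 := fun h => hm0 (Nat.eq_zero_of_zero_dvd (h ▸ hum))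
    refine ⟨hum, hpu, hu0, le_antisymm ?_ ?_⟩
    · exact hedef ▸ ((Nat.factorization_le_iff_dvd hu0 hm0).mpr hum) p
    · exact (hp.pow_dvd_iff_le_factorization hu0).mp hpu
  -- step A : regroup the sum over U
  have stepA : gSumAux a m = ∑ u ∈ U, (f u + f (u / p)) := by
    rw [Finset.sum_add_distrib]
    have h1 : gSumAux a m = (∑ u ∈ U, f u)
        + ∑ d ∈ m.divisors.filter (fun d => ¬ p ^ e ∣ d), f d :=
      (Finset.sum_filter_add_sum_filter_not _ _ _).symm
    rw [h1]
    congr 1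
    have h2 : ∑ d ∈ (m.divisors.filter (fun d => ¬ p ^ e ∣ d)).filter
        (fun d => p ^ (e - 1) ∣ d), f d
        = ∑ d ∈ m.divisors.filter (fun d => ¬ p ^ e ∣ d), f d := by
      apply Finset.sum_filter_of_ne
      intro d hd hfd
      rw [Finset.mem_filter, Nat.mem_divisors] at hd
      obtain ⟨⟨hdm, -⟩, hnd⟩ := hd
      by_contra hnd1
      have hd0 : d ≠ 0 := fun h => hm0 (Nat.eq_zero_of_zero_dvd (h ▸ hdm))
      have hvd : d.factorization p < e - 1 := by
        have := (hp.pow_dvd_iff_le_factorization hd0).not.mp hnd1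
        omega
      have hvd' : d.factorization p ≤ e := hedef ▸
        ((Nat.factorization_le_iff_dvd hd0 hm0).mpr hdm) p
      have hmd0 : m / d ≠ 0 :=
        (Nat.div_pos (Nat.le_of_dvd hm hdm) (Nat.pos_of_ne_zero hd0)).ne'
      have hsq : p ^ 2 ∣ m / d := by
        rw [hp.pow_dvd_iff_le_factorization hmd0, Nat.factorization_div hdm,
          Finsupp.tsub_apply]
        omega
      have : ¬ Squarefree (m / d) := fun hs =>
        hp.not_isUnit (hs p (by rw [← pow_two]; exact hsq))
      apply hfd
      rw [hf]
      simp [ArithmeticFunction.moebius_eq_zero_of_not_squarefree this]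
    rw [← h2, Finset.filter_filter]
    refine Finset.sum_nbij' (fun d => d * p) (fun u => u / p) ?_ ?_ ?_ ?_ ?_
    · -- d ∈ T → d * p ∈ U
      intro d hd
      rw [Finset.mem_filter, Nat.mem_divisors] at hd
      obtain ⟨⟨hdm, -⟩, hnd, hd1⟩ := hd
      have hd0 : d ≠ 0 := fun h => hm0 (Nat.eq_zero_of_zero_dvd (h ▸ hdm))
      have hveq : d.factorization p = e - 1 := by
        have h1 := (hp.pow_dvd_iff_le_factorization hd0).not.mp hnd
        have h2 := (hp.pow_dvd_iff_le_factorization hd0).mp hd1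
        omega
      have hmd0 : m / d ≠ 0 :=
        (Nat.div_pos (Nat.le_of_dvd hm hdm) (Nat.pos_of_ne_zero hd0)).ne'
      have hpmd : p ∣ m / d := by
        have : p ^ 1 ∣ m / d := by
          rw [hp.pow_dvd_iff_le_factorization hmd0, Nat.factorization_div hdm,
            Finsupp.tsub_apply]
          omega
        rwa [pow_one] at this
      rw [hU, Finset.mem_filter, Nat.mem_divisors]
      refine ⟨⟨?_, hm0⟩, ?_⟩
      · have := Nat.mul_dvd_mul_left d hpmd
        rwa [Nat.mul_div_cancel' hdm] at this
      · have : p ^ (e - 1) * p ∣ d * p := mul_dvd_mul hd1 dvd_rfl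
        rwa [← pow_succ, show e - 1 + 1 = e by omega] at this
    · -- u ∈ U → u / p ∈ T
      intro u hu
      obtain ⟨hum, hpu, hu0, hveq⟩ := hUfacts u hu
      have hpu' : p ∣ u := dvd_trans (dvd_pow_self p he1.ne') hpu
      rw [Finset.mem_filter, Nat.mem_divisors]
      refine ⟨⟨dvd_trans (Nat.div_dvd_of_dvd hpu') hum, hm0⟩, ?_, ?_⟩
      · rw [Nat.dvd_div_iff_mul_dvd hpu', ← pow_succ']
        intro hcon
        have h2 := (hp.pow_dvd_iff_le_factorization hu0).mp hcon
        omega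
      · rw [Nat.dvd_div_iff_mul_dvd hpu', ← pow_succ', show e - 1 + 1 = e by omega]
        exact hpu
    · intro d _; exact Nat.mul_div_cancel _ hp.pos
    · intro u hu
      obtain ⟨-, hpu, -, -⟩ := hUfacts u hu
      exact Nat.div_mul_cancel (dvd_trans (dvd_pow_self p he1.ne') hpu)
    · intro d _
      rw [Nat.mul_div_cancel _ hp.pos]
  -- step B : each term is divisible by p ^ e
  rw [stepA]
  apply Finset.dvd_sum
  intro u hu
  obtain ⟨hum, hpu, hu0, hveq⟩ := hUfacts u hu
  have hpu' : p ∣ u := dvd_trans (dvd_pow_self p he1.ne') hpu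
  have hup0 : 0 < u / p := Nat.div_pos (Nat.le_of_dvd (Nat.pos_of_ne_zero hu0) hpu') hp.pos
  have hmu0 : m / u ≠ 0 :=
    (Nat.div_pos (Nat.le_of_dvd hm hum) (Nat.pos_of_ne_zero hu0)).ne'
  have hpnmu : ¬ p ∣ m / u := by
    intro hcon
    have : p ^ 1 ∣ m / u := by rwa [pow_one]
    rw [hp.pow_dvd_iff_le_factorization hmu0, Nat.factorization_div hum,
      Finsupp.tsub_apply] at this
    omega
  have key1 : m / (u / p) = p * (m / u) := by
    have hmm : m = p * (m / u) * (u / p) := by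
      rw [mul_comm (p * (m / u)) (u / p), ← mul_assoc, Nat.div_mul_cancel hpu',
        Nat.mul_div_cancel' hum]
    exact Nat.div_eq_of_eq_mul_left hup0 hmm
  have hmu : (μ (m / (u / p)) : ℤ) = -(μ (m / u) : ℤ) := by
    rw [key1, isMultiplicative_moebius.map_mul_of_coprime
      ((hp.coprime_iff_not_dvd).mpr hpnmu), moebius_apply_prime hp]
    ring
  have hterm : f u + f (u / p) = (μ (m / u) : ℤ) * (a u - a (u / p)) := by
    rw [hf]
    simp only []
    rw [hmu]
    ring
  rw [hterm]
  apply Dvd.dvd.mul_left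
  -- use the Gauss congruence
  set c := u / p ^ e with hc
  have hcu : c * p ^ e = u := Nat.div_mul_cancel hpu
  have hcu' : c * p ^ (e - 1) = u / p := by
    rw [← hcu, show c * p ^ e = c * p ^ (e - 1) * p by
      rw [mul_assoc, ← pow_succ, show e - 1 + 1 = e by omega],
      Nat.mul_div_cancel _ hp.pos]
  have := (H p hp c e he1).dvd
  rw [hcu, hcu'] at this
  exact dvd_sub_comm.mp this


/-- A sequence of integers satisfies the Gauss congruences for all primes if and only if
for every positive integer `m`, `m` divides `∑_{d ∣ m} μ(m/d)·a_d`. -/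
theorem gauss_congruences_iff_moebius_sum (a : ℕ → ℤ) :
    (∀ p : ℕ, p.Prime → ∀ m r : ℕ, 1 ≤ r →
      a (m * p ^ r) ≡ a (m * p ^ (r - 1)) [ZMOD (p : ℤ) ^ r]) ↔
    (∀ m : ℕ, 0 < m →
      (m : ℤ) ∣ ∑ d ∈ m.divisors, ArithmeticFunction.moebius (m / d) * a d) := by
  constructor
  · intro H m hm
    have key : ∀ q ∈ m.primeFactors, ((q : ℤ) ^ (m.factorization q)) ∣ gSumAux a m :=
      fun q hq => pow_dvd_gSumAux a H hm (Nat.prime_of_mem_primeFactors hq)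
    have h1 : m.factorization.prod (· ^ ·) = m := Nat.factorization_prod_pow_eq_self hm.ne'
    have hmprod : (m : ℤ) = ∏ q ∈ m.primeFactors, (q : ℤ) ^ (m.factorization q) := by
      conv_lhs => rw [← h1]
      rw [Finsupp.prod, Nat.support_factorization]
      push_cast
      rfl
    rw [hmprod]
    exact Finset.prod_dvd_of_coprime
      (fun q hq q' hq' hne => by
        have hqp := Nat.prime_of_mem_primeFactors (Finset.mem_coe.mp hq)
        have hq'p := Nat.prime_of_mem_primeFactors (Finset.mem_coe.mp hq')
        exact (Nat.isCoprime_iff_coprime.mpr ((Nat.coprime_primes hqp hq'p).mpr hne)).pow)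
      key
  · intro H p hp m r hr
    rcases Nat.eq_zero_or_pos m with rfl | hm
    · simp only [Nat.zero_mul]; exact Int.ModEq.refl _
    · have hH : ∀ n : ℕ, 0 < n → (n : ℤ) ∣ gSumAux a n := H
      set N1 := m * p ^ (r - 1) with hN1
      set N2 := m * p ^ r with hN2
      have hN2pos : 0 < N2 := Nat.mul_pos hm (Nat.pow_pos (n := r) hp.pos)
      have hN1pos : 0 < N1 := Nat.mul_pos hm (Nat.pow_pos hp.pos)
      have hdvd : N1 ∣ N2 := mul_dvd_mul_left m (pow_dvd_pow p (by omega))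
      have hsub : N1.divisors ⊆ N2.divisors := Nat.divisors_subset_of_dvd hN2pos.ne' hdvd
      have hsum : a N2 - a N1 = ∑ d ∈ N2.divisors \ N1.divisors, gSumAux a d := by
        rw [Finset.sum_sdiff_eq_sub hsub, gSumAux_inversion a N2 hN2pos,
          gSumAux_inversion a N1 hN1pos]
      have hdiv : ((p : ℤ)) ^ r ∣ a N2 - a N1 := by
        rw [hsum]
        apply Finset.dvd_sum
        intro d hd
        rw [Finset.mem_sdiff] at hd
        obtain ⟨hd2, hd1⟩ := hd
        rw [Nat.mem_divisors] at hd2 hd1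
        have hdN2 : d ∣ N2 := hd2.1
        have hd0 : d ≠ 0 := fun h => hN2pos.ne' (Nat.eq_zero_of_zero_dvd (h ▸ hdN2))
        have hndN1 : ¬ d ∣ N1 := fun h => hd1 ⟨h, hN1pos.ne'⟩
        have hpr : p ^ r ∣ d := by
          by_contra hcon
          set v := d.factorization p with hv
          have hvr : v ≤ r - 1 := by
            have := (hp.pow_dvd_iff_le_factorization hd0).not.mp hcon
            omega
          have hnp : ¬ p ∣ d / p ^ v := Nat.not_dvd_ordCompl hp hd0
          have hcop : Nat.Coprime (d / p ^ v) (p ^ r) :=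
            Nat.Coprime.pow_right r (Nat.coprime_comm.mp ((hp.coprime_iff_not_dvd).mpr hnp))
          have hu : d / p ^ v ∣ m :=
            hcop.dvd_of_dvd_mul_right
              (dvd_trans (Nat.div_dvd_of_dvd (Nat.ordProj_dvd d p)) hdN2)
          apply hndN1
          have hds : d = p ^ v * (d / p ^ v) := (Nat.ordProj_mul_ordCompl_eq_self d p).symm
          rw [hds, hN1, mul_comm m (p ^ (r - 1))]
          exact mul_dvd_mul (pow_dvd_pow p hvr) hu
        have h2 : ((p : ℤ)) ^ r ∣ (d : ℤ) := by exact_mod_cast hpr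
        exact dvd_trans h2 (hH d (Nat.pos_of_ne_zero hd0))
      exact Int.ModEq.symm (Int.modEq_iff_dvd.mpr hdiv)
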